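/- Fix nonnegative integers m, b, k with m > b. The number of words of length 2m-1 over the alphabet {A, L, T} having exactly k occurrences of A, m+b-k occurrences of L, m-b-1 occurrences of T, and containing no occurrence of the consecutive pattern TL, equals binom(m+b, k) * binom(m-b-1+k, k). -/

import Mathlib

/-- The three-letter alphabet {A, L, T}. -/
inductive ALT : Type
  | A | L | T
deriving DecidableEq

open ALT

abbrev noTL (w : List ALT) : Prop := List.Chain' (fun x y => ¬(x = T ∧ y = L)) w
def allW : ℕ → Finset (List ALT)
  | 0 => {[]}
  | n+1 => (allW n).biUnion (fun w => {A :: w, L :: w, T :: w})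
lemma mem_allW {n : ℕ} {w : List ALT} : w ∈ allW n ↔ w.length = n := by
  induction n generalizing w with
  | zero => simp [allW, List.length_eq_zero_iff]
  | succ n ih =>
    cases w with
    | nil => simp [allW]
    | cons x w =>
      simp only [allW, Finset.mem_biUnion, Finset.mem_insert, Finset.mem_singleton,
        List.length_cons, Nat.add_left_inj, ← ih]
      constructor
      · rintro ⟨u, hu, h | h | h⟩ <;> simp_all
      · intro h; exact ⟨w, h, by cases x <;> simp⟩
lemma count_sum (w : List ALT) : w.count A + w.count L + w.count T = w.length := by
  induction w with
  | nil => simp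
  | cons x w ih => cases x <;> simp [List.count_cons] <;> omega
instance (w : List ALT) : Decidable (noTL w) :=
  inferInstanceAs (Decidable (List.IsChain (fun x y => ¬(x = T ∧ y = L)) w))
def FS (a l t : ℕ) : Finset (List ALT) :=
  (allW (a+l+t)).filter (fun w => w.count A = a ∧ w.count L = l ∧ w.count T = t ∧ noTL w)
def GS (a l t : ℕ) : Finset (List ALT) :=
  (FS a l t).filter (fun w => w.head? ≠ some L)
lemma mem_FS {a l t : ℕ} {w : List ALT} :
    w ∈ FS a l t ↔ w.count A = a ∧ w.count L = l ∧ w.count T = t ∧ noTL w := by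
  constructor
  · intro h; exact (Finset.mem_filter.1 h).2
  · intro h
    refine Finset.mem_filter.2 ⟨mem_allW.2 ?_, h⟩
    rw [← count_sum w, h.1, h.2.1, h.2.2.1]

lemma mem_GS {a l t : ℕ} {w : List ALT} :
    w ∈ GS a l t ↔ w ∈ FS a l t ∧ w.head? ≠ some L := Finset.mem_filter

-- cons lemmas about noTL
lemma noTL_cons_A {w : List ALT} : noTL (A :: w) ↔ noTL w := by
  unfold noTL List.Chain'; rw [List.isChain_cons]; simp
lemma noTL_cons_L {w : List ALT} : noTL (L :: w) ↔ noTL w := by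
  unfold noTL List.Chain'; rw [List.isChain_cons]; simp
lemma noTL_cons_T {w : List ALT} : noTL (T :: w) ↔ noTL w ∧ w.head? ≠ some L := by
  unfold noTL List.Chain'; rw [List.isChain_cons]
  constructor
  · rintro ⟨h1, h2⟩
    refine ⟨h2, fun hL => ?_⟩
    have := h1 L; simp_all
  · rintro ⟨h1, h2⟩
    refine ⟨fun y hy => ?_, h1⟩
    rintro ⟨-, rfl⟩
    exact h2 hy

lemma filter_head_A (a l t : ℕ) :
    ((FS (a+1) l t).filter (fun w => w.head? = some A)) = (FS a l t).image (A :: ·) := by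
  ext w
  simp only [Finset.mem_filter, Finset.mem_image, mem_FS]
  constructor
  · rintro ⟨⟨hA, hL, hT, hc⟩, hh⟩
    cases w with
    | nil => simp at hh
    | cons x u =>
      simp only [List.head?_cons, Option.some.injEq] at hh
      subst hh
      refine ⟨u, ⟨?_, ?_, ?_, noTL_cons_A.1 hc⟩, rfl⟩ <;>
        simp [List.count_cons] at hA hL hT ⊢ <;> omega
  · rintro ⟨u, ⟨hA, hL, hT, hc⟩, rfl⟩
    refine ⟨⟨?_, ?_, ?_, noTL_cons_A.2 hc⟩, rfl⟩ <;>
      simp [List.count_cons] <;> omega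

lemma filter_head_L (a l t : ℕ) :
    ((FS a (l+1) t).filter (fun w => w.head? = some L)) = (FS a l t).image (L :: ·) := by
  ext w
  simp only [Finset.mem_filter, Finset.mem_image, mem_FS]
  constructor
  · rintro ⟨⟨hA, hL, hT, hc⟩, hh⟩
    cases w with
    | nil => simp at hh
    | cons x u =>
      simp only [List.head?_cons, Option.some.injEq] at hh
      subst hh
      refine ⟨u, ⟨?_, ?_, ?_, noTL_cons_L.1 hc⟩, rfl⟩ <;>
        simp [List.count_cons] at hA hL hT ⊢ <;> omega
  · rintro ⟨u, ⟨hA, hL, hT, hc⟩, rfl⟩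
    refine ⟨⟨?_, ?_, ?_, noTL_cons_L.2 hc⟩, rfl⟩ <;>
      simp [List.count_cons] <;> omega

lemma filter_head_T (a l t : ℕ) :
    ((FS a l (t+1)).filter (fun w => w.head? = some T)) = (GS a l t).image (T :: ·) := by
  ext w
  simp only [Finset.mem_filter, Finset.mem_image, mem_FS, mem_GS]
  constructor
  · rintro ⟨⟨hA, hL, hT, hc⟩, hh⟩
    cases w with
    | nil => simp at hh
    | cons x u =>
      simp only [List.head?_cons, Option.some.injEq] at hh
      subst hh
      obtain ⟨hc', hhd⟩ := noTL_cons_T.1 hc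
      refine ⟨u, ⟨⟨?_, ?_, ?_, hc'⟩, hhd⟩, rfl⟩ <;>
        simp [List.count_cons] at hA hL hT ⊢ <;> omega
  · rintro ⟨u, ⟨⟨hA, hL, hT, hc⟩, hhd⟩, rfl⟩
    refine ⟨⟨?_, ?_, ?_, noTL_cons_T.2 ⟨hc, hhd⟩⟩, rfl⟩ <;>
      simp [List.count_cons] <;> omega

lemma filter_head_A0 (l t : ℕ) :
    ((FS 0 l t).filter (fun w => w.head? = some A)) = ∅ := by
  ext w
  simp only [Finset.mem_filter, mem_FS, Finset.notMem_empty, iff_false, not_and]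
  rintro ⟨hA, -⟩ hh
  cases w with
  | nil => simp at hh
  | cons x u =>
    simp only [List.head?_cons, Option.some.injEq] at hh
    subst hh; simp [List.count_cons] at hA

lemma filter_head_L0 (a t : ℕ) :
    ((FS a 0 t).filter (fun w => w.head? = some L)) = ∅ := by
  ext w
  simp only [Finset.mem_filter, mem_FS, Finset.notMem_empty, iff_false, not_and]
  rintro ⟨-, hL, -⟩ hh
  cases w with
  | nil => simp at hh
  | cons x u =>
    simp only [List.head?_cons, Option.some.injEq] at hh
    subst hh; simp [List.count_cons] at hL

lemma filter_head_T0 (a l : ℕ) :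
    ((FS a l 0).filter (fun w => w.head? = some T)) = ∅ := by
  ext w
  simp only [Finset.mem_filter, mem_FS, Finset.notMem_empty, iff_false, not_and]
  rintro ⟨-, -, hT, -⟩ hh
  cases w with
  | nil => simp at hh
  | cons x u =>
    simp only [List.head?_cons, Option.some.injEq] at hh
    subst hh; simp [List.count_cons] at hT

lemma cons_inj (x : ALT) : Function.Injective (x :: · : List ALT → List ALT) :=
  fun u v h => by injection h

lemma FS_nonempty_mem {a l t : ℕ} (h : a + l + t ≠ 0) {w : List ALT} (hw : w ∈ FS a l t) :
    w ≠ [] := by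
  rintro rfl
  obtain ⟨hA, hL, hT, -⟩ := mem_FS.1 hw
  simp at hA hL hT; omega

lemma card_FS_split (a l t : ℕ) (h : a + l + t ≠ 0) :
    (FS a l t).card =
      ((FS a l t).filter (fun w => w.head? = some A)).card +
      ((FS a l t).filter (fun w => w.head? = some L)).card +
      ((FS a l t).filter (fun w => w.head? = some T)).card := by
  classical
  have hsplit : FS a l t =
      ((FS a l t).filter (fun w => w.head? = some A)) ∪
      ((FS a l t).filter (fun w => w.head? = some L)) ∪
      ((FS a l t).filter (fun w => w.head? = some T)) := by
    ext w
    simp only [Finset.mem_union, Finset.mem_filter]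
    constructor
    · intro hw
      have := FS_nonempty_mem h hw
      cases w with
      | nil => simp_all
      | cons x u => cases x <;> simp [hw]
    · rintro ((⟨hw, -⟩ | ⟨hw, -⟩) | ⟨hw, -⟩) <;> exact hw
  conv_lhs => rw [hsplit]
  rw [Finset.card_union_of_disjoint, Finset.card_union_of_disjoint]
  · rw [Finset.disjoint_left]
    intro w hw hw'
    have h1 := (Finset.mem_filter.1 hw).2
    have h2 := (Finset.mem_filter.1 hw').2
    rw [h1] at h2; simp at h2
  · rw [Finset.disjoint_left]
    intro w hw hw'
    have h2 := (Finset.mem_filter.1 hw').2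
    rcases Finset.mem_union.1 hw with h | h <;>
      · have h1 := (Finset.mem_filter.1 h).2
        rw [h1] at h2; simp at h2

lemma card_GS_split (a l t : ℕ) (h : a + l + t ≠ 0) :
    (GS a l t).card =
      ((FS a l t).filter (fun w => w.head? = some A)).card +
      ((FS a l t).filter (fun w => w.head? = some T)).card := by
  classical
  have hsplit : GS a l t =
      ((FS a l t).filter (fun w => w.head? = some A)) ∪
      ((FS a l t).filter (fun w => w.head? = some T)) := by
    ext w
    simp only [Finset.mem_union, Finset.mem_filter, mem_GS]
    constructor
    · rintro ⟨hw, hh⟩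
      have := FS_nonempty_mem h hw
      cases w with
      | nil => simp_all
      | cons x u => cases x <;> simp_all
    · rintro (⟨hw, hh⟩ | ⟨hw, hh⟩) <;> refine ⟨hw, ?_⟩ <;> rw [hh] <;> simp
  conv_lhs => rw [hsplit]
  rw [Finset.card_union_of_disjoint]
  rw [Finset.disjoint_left]
  intro w hw hw'
  have h1 := (Finset.mem_filter.1 hw).2
  have h2 := (Finset.mem_filter.1 hw').2
  rw [h1] at h2; simp at h2

lemma cA_succ (a l t : ℕ) :
    ((FS (a+1) l t).filter (fun w => w.head? = some A)).card = (FS a l t).card := by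
  rw [filter_head_A, Finset.card_image_of_injective _ (cons_inj A)]
lemma cL_succ (a l t : ℕ) :
    ((FS a (l+1) t).filter (fun w => w.head? = some L)).card = (FS a l t).card := by
  rw [filter_head_L, Finset.card_image_of_injective _ (cons_inj L)]
lemma cT_succ (a l t : ℕ) :
    ((FS a l (t+1)).filter (fun w => w.head? = some T)).card = (GS a l t).card := by
  rw [filter_head_T, Finset.card_image_of_injective _ (cons_inj T)]
lemma cA_zero (l t : ℕ) :
    ((FS 0 l t).filter (fun w => w.head? = some A)).card = 0 := by
  rw [filter_head_A0]; rfl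
lemma cL_zero (a t : ℕ) :
    ((FS a 0 t).filter (fun w => w.head? = some L)).card = 0 := by
  rw [filter_head_L0]; rfl
lemma cT_zero (a l : ℕ) :
    ((FS a l 0).filter (fun w => w.head? = some T)).card = 0 := by
  rw [filter_head_T0]; rfl

lemma FS_zero : FS 0 0 0 = {([] : List ALT)} := by
  ext w
  rw [mem_FS]
  constructor
  · rintro ⟨hA, hL, hT, -⟩
    have := count_sum w
    rw [hA, hL, hT] at this
    simp [List.length_eq_zero_iff.1 this.symm]
  · rintro h
    simp only [Finset.mem_singleton] at h
    subst h; simp [noTL, List.Chain', List.isChain_nil]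

lemma GS_zero : GS 0 0 0 = {([] : List ALT)} := by
  rw [GS, FS_zero]
  rfl

lemma card_main : ∀ n a l t : ℕ, a + l + t = n →
    (FS a l t).card = (a+l).choose a * (a+t).choose a ∧
    (GS a l t).card = (a+l-1).choose l * (a+t).choose a := by
  intro n
  induction n using Nat.strong_induction_on with
  | _ n ih =>
    intro a l t hn
    match n, hn with
    | 0, hn =>
      obtain ⟨rfl, rfl, rfl⟩ : a = 0 ∧ l = 0 ∧ t = 0 := by omega
      rw [FS_zero, GS_zero]; simp
    | (n+1), hn =>
      have hF : ∀ a' l' t', a' + l' + t' = n →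
          (FS a' l' t').card = (a'+l').choose a' * (a'+t').choose a' :=
        fun a' l' t' h => (ih n (by omega) a' l' t' h).1
      have hG : ∀ a' l' t', a' + l' + t' = n →
          (GS a' l' t').card = (a'+l'-1).choose l' * (a'+t').choose a' :=
        fun a' l' t' h => (ih n (by omega) a' l' t' h).2
      rw [card_FS_split a l t (by omega), card_GS_split a l t (by omega)]
      rcases a with _ | a <;> rcases l with _ | l <;> rcases t with _ | t
      · omega
      · rw [cA_zero, cL_zero, cT_succ, hG 0 0 t (by omega)]
        constructor <;> simp
      · rw [cA_zero, cL_succ, cT_zero, hF 0 l 0 (by omega)]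
        constructor <;> simp [Nat.choose_eq_zero_of_lt (Nat.lt_succ_self l)]
      · rw [cA_zero, cL_succ, cT_succ, hF 0 l (t+1) (by omega), hG 0 (l+1) t (by omega)]
        constructor <;> simp [Nat.choose_eq_zero_of_lt (Nat.lt_succ_self l)]
      · rw [cA_succ, cL_zero, cT_zero, hF a 0 0 (by omega)]
        constructor <;> simp [Nat.choose_self]
      · rw [cA_succ, cL_zero, cT_succ, hF a 0 (t+1) (by omega), hG (a+1) 0 t (by omega)]
        constructor <;>
          · simp only [Nat.add_zero, Nat.choose_self, Nat.choose_zero_right, one_mul, mul_one,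
              Nat.add_sub_cancel]
            rw [show a + (t+1) = a+t+1 by omega, show a+1+t = a+t+1 by omega,
              show a+1+(t+1) = (a+t+1)+1 by omega]
            exact (Nat.choose_succ_succ (a+t+1) a).symm
      · rw [cA_succ, cL_succ, cT_zero, hF a (l+1) 0 (by omega), hF (a+1) l 0 (by omega)]
        have hsym : (a+l+1).choose (l+1) = (a+l+1).choose a := by
          rw [show l+1 = a+l+1-a by omega]; exact Nat.choose_symm (by omega)
        rw [show a + (l+1) = a+l+1 by omega, show a+1+l = a+l+1 by omega,
          show a+1+(l+1) = (a+l+1)+1 by omega, show a+l+1+1-1 = a+l+1 by omega]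
        constructor
        · simp only [Nat.add_zero, Nat.choose_self, mul_one, add_zero]
          rw [Nat.choose_succ_succ (a+l+1) a]
        · simp only [Nat.add_zero, Nat.choose_self, mul_one, add_zero, hsym]
      · rw [cA_succ, cL_succ, cT_succ, hF a (l+1) (t+1) (by omega),
          hF (a+1) l (t+1) (by omega), hG (a+1) (l+1) t (by omega)]
        rw [show a + (l+1) = a+l+1 by omega, show a+1+l = a+l+1 by omega,
          show a+1+(l+1) = (a+l+1)+1 by omega, show a+l+1+1-1 = a+l+1 by omega,
          show a + (t+1) = a+t+1 by omega, show a+1+t = a+t+1 by omega,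
          show a+1+(t+1) = (a+t+1)+1 by omega]
        have hsym : (a+l+1).choose (l+1) = (a+l+1).choose a := by
          rw [show l+1 = a+l+1-a by omega]; exact Nat.choose_symm (by omega)
        rw [hsym, Nat.choose_succ_succ (a+l+1) a, Nat.choose_succ_succ (a+t+1) a]
        constructor <;> ring

theorem stmt5 (m b k : ℕ) (hmb : b < m) :
    Nat.card {w : List ALT //
        w.length + 1 = 2 * m ∧
        w.count A = k ∧ w.count L + k = m + b ∧ w.count T + b + 1 = m ∧
        List.Chain' (fun x y => ¬(x = T ∧ y = L)) w} =
      Nat.choose (m + b) k * Nat.choose (m - b - 1 + k) k := by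
  by_cases hk : k ≤ m + b
  · have hiff : ∀ w : List ALT,
        (w.length + 1 = 2 * m ∧
          w.count A = k ∧ w.count L + k = m + b ∧ w.count T + b + 1 = m ∧
          List.Chain' (fun x y => ¬(x = T ∧ y = L)) w) ↔
        w ∈ FS k (m + b - k) (m - b - 1) := by
      intro w
      rw [mem_FS]
      constructor
      · rintro ⟨h1, h2, h3, h4, h5⟩
        exact ⟨h2, by omega, by omega, h5⟩
      · rintro ⟨h2, h3, h4, h5⟩
        have hlen := count_sum w
        rw [h2, h3, h4] at hlen
        exact ⟨by omega, h2, by omega, by omega, h5⟩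
    rw [Nat.card_congr (Equiv.subtypeEquivRight hiff), Nat.card_eq_finsetCard,
      (card_main (k + (m+b-k) + (m-b-1)) k (m+b-k) (m-b-1) rfl).1,
      show k + (m+b-k) = m + b by omega, show k + (m-b-1) = m - b - 1 + k by omega]
  · have he : IsEmpty {w : List ALT //
        w.length + 1 = 2 * m ∧
        w.count A = k ∧ w.count L + k = m + b ∧ w.count T + b + 1 = m ∧
        List.Chain' (fun x y => ¬(x = T ∧ y = L)) w} := by
      constructor
      rintro ⟨w, -, -, h3, -, -⟩
      omega
    rw [Nat.card_of_isEmpty, Nat.choose_eq_zero_of_lt (by omega), zero_mul]
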